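/- Let n ∈ ℤ>0 and suppose g ∈ V^n₊(ℝ) satisfies g⁽ᵐ⁾(0) = 0 for m = 1,…,n. If h ∈ Cⁿ(ℝ) and b ∈ ℂ satisfy the window condition ∑_{m∈ℤ} g(x+m)·conj(h(x+m)) = b for all x ∈ ℝ, then h⁽ᵐ⁾(0) = 0 for m = 1,…,n. -/

import Mathlib

open MeasureTheory Filter Topology Set

noncomputable section

attribute [local instance] Classical.propDecidable

/-- `kmax b` is the largest nonnegative integer strictly smaller than `b/(1-b)`. -/
def kmax (b : ℝ) : ℕ := ⌈b / (1 - b)⌉₊ - 1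

/-- The window class `V⁺ⁿ(ℝ)`: `Cⁿ` functions with support exactly `[-1,1]`,
nonvanishing on `(-1,1)`. -/
def Vplus (n : ℕ) (g : ℝ → ℂ) : Prop :=
  ContDiff ℝ n g ∧ tsupport g = Set.Icc (-1 : ℝ) 1 ∧ ∀ x ∈ Set.Ioo (-1 : ℝ) 1, g x ≠ 0

/-- The `1`-periodic function `ψ(x) = 1 / ∑ₙ g(x+n)`. -/
def psiFun (g : ℝ → ℂ) (x : ℝ) : ℂ := 1 / ∑' n : ℤ, g (x + n)

/-- The auxiliary function `γ_k` (translated so that it is defined near `[k/b, k+1]`). -/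
def gammaAux (b : ℝ) (g z : ℝ → ℂ) (k : ℕ) (x : ℝ) : ℂ :=
  (-1 : ℂ) ^ k *
    (∏ j ∈ Finset.Icc 1 k,
      g (x - k - 1 - j * (1 / b - 1)) / g (x - k - j * (1 / b - 1))) *
    (g (x - k - 1) * z (x - k) + (b : ℂ) * psiFun g (x - k))

/-- The auxiliary function `η_k` (translated so that it is defined near `[-k-1, -k/b]`). -/
def etaAux (b : ℝ) (g z : ℝ → ℂ) (k : ℕ) (x : ℝ) : ℂ :=
  (-1 : ℂ) ^ k *
    (∏ j ∈ Finset.Icc 1 k,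
      g (x + k + 1 + j * (1 / b - 1)) / g (x + k + j * (1 / b - 1))) *
    (-(g (x + k + 1) * z (x + k + 1)) + (b : ℂ) * psiFun g (x + k + 1))

/-- The dual window candidate `h_z`, defined piecewise (the pieces are pairwise disjoint). -/
def hz (b : ℝ) (g z : ℝ → ℂ) (x : ℝ) : ℂ :=
  (starRingEnd ℂ)
    (if x ∈ Set.Ico (-1 : ℝ) 0 then etaAux b g z 0 x
     else if x ∈ Set.Icc (0 : ℝ) 1 then gammaAux b g z 0 x
     else if hk : ∃ k : ℕ, 1 ≤ k ∧ k ≤ kmax b ∧ x ∈ Set.Icc ((k : ℝ) / b) ((k : ℝ) + 1) then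
       gammaAux b g z hk.choose x
     else if hk : ∃ k : ℕ, 1 ≤ k ∧ k ≤ kmax b ∧ x ∈ Set.Icc (-(k : ℝ) - 1) (-(k : ℝ) / b) then
       etaAux b g z hk.choose x
     else 0)

/-- The time–frequency shift `M_{bm} T_k w`. -/
def timeFreqShift (b : ℝ) (m k : ℤ) (w : ℝ → ℂ) : ℝ → ℂ :=
  fun x => Complex.exp (2 * Real.pi * Complex.I * (b : ℂ) * (m : ℂ) * (x : ℂ)) * w (x - k)

/-- The Gabor coefficient `⟨f, M_{bm} T_k w⟩` in `L²(ℝ)`. -/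
def gaborCoef (b : ℝ) (w f : ℝ → ℂ) (m k : ℤ) : ℂ :=
  ∫ x : ℝ, f x * (starRingEnd ℂ) (timeFreqShift b m k w x)

/-- The Gabor system `G(w,1,b)` is a Bessel system. -/
def GaborBessel (b : ℝ) (w : ℝ → ℂ) : Prop :=
  MemLp w 2 (volume : Measure ℝ) ∧
  ∃ B > (0 : ℝ), ∀ f : ℝ → ℂ, MemLp f 2 (volume : Measure ℝ) →
    ∑' mk : ℤ × ℤ, ‖gaborCoef b w f mk.1 mk.2‖ ^ 2 ≤ B * ∫ x : ℝ, ‖f x‖ ^ 2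

/-- `G(g,1,b)` and `G(h,1,b)` are dual frames: both Bessel, and every `f ∈ L²(ℝ)` has the
reconstruction `f = ∑_{m,k} ⟨f, M_{bm}T_k g⟩ M_{bm}T_k h` with unconditional `L²`-convergence. -/
def GaborDualFrames (b : ℝ) (g h : ℝ → ℂ) : Prop :=
  GaborBessel b g ∧ GaborBessel b h ∧
  ∀ f : Lp ℂ 2 (volume : Measure ℝ),
    ∃ F : ℤ × ℤ → Lp ℂ 2 (volume : Measure ℝ),
      (∀ mk : ℤ × ℤ, (F mk : ℝ → ℂ) =ᵐ[volume]
        fun x => gaborCoef b g (f : ℝ → ℂ) mk.1 mk.2 * timeFreqShift b mk.1 mk.2 h x) ∧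
      HasSum F f

/-- `F` has a simple discontinuity at `x₀`: both one-sided limits exist but differ. -/
def SimpleDiscontAt (F : ℝ → ℂ) (x₀ : ℝ) : Prop :=
  ∃ l r : ℂ, Tendsto F (𝓝[<] x₀) (𝓝 l) ∧ Tendsto F (𝓝[>] x₀) (𝓝 r) ∧ l ≠ r

/-- `f` is piecewise `C^{n+1}` with seam points contained in the finite set `s`:
`f` is `C^{n+1}` off `s`, and at each point of `s` the one-sided limits of the
`(n+1)`-st derivative exist. -/
def PiecewiseCn1 (n : ℕ) (f : ℝ → ℂ) (s : Finset ℝ) : Prop :=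
  (∀ y : ℝ, y ∉ s → ContDiffAt ℝ (n + 1) f y) ∧
  ∀ y ∈ s, (∃ l, Tendsto (iteratedDeriv (n + 1) f) (𝓝[<] y) (𝓝 l)) ∧
           (∃ r, Tendsto (iteratedDeriv (n + 1) f) (𝓝[>] y) (𝓝 r))

/-- iterated derivative of a constant -/
lemma myIteratedDeriv_const (m : ℕ) (c : ℂ) :
    iteratedDeriv m (fun _ : ℝ => c) = fun _ => if m = 0 then c else 0 := by
  induction m with
  | zero => simp
  | succ k ih =>
    rw [iteratedDeriv_succ, ih]
    funext x
    rcases Nat.eq_zero_or_pos k with hk | hk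
    · simp [hk]
    · simp [hk.ne']

/-- global iteratedDeriv_add -/
lemma myIteratedDeriv_add {m : ℕ} {f g : ℝ → ℂ} (hf : ContDiff ℝ m f) (hg : ContDiff ℝ m g) (x : ℝ) :
    iteratedDeriv m (fun y => f y + g y) x = iteratedDeriv m f x + iteratedDeriv m g x := by
  have := iteratedDerivWithin_add (𝕜 := ℝ) (f := f) (g := g) (s := Set.univ) (x := x)
    (Set.mem_univ x) uniqueDiffOn_univ hf.contDiffWithinAt hg.contDiffWithinAt
  change iteratedDeriv m (f + g) x = _
  simpa [iteratedDerivWithin_univ] using this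

/-- conj commutes with iteratedDeriv -/
lemma myIteratedDeriv_conj (m : ℕ) (f : ℝ → ℂ) :
    iteratedDeriv m (fun x => (starRingEnd ℂ) (f x)) = fun x => (starRingEnd ℂ) (iteratedDeriv m f x) := by
  induction m with
  | zero => simp
  | succ k ih =>
    rw [iteratedDeriv_succ, ih]
    funext x
    rw [iteratedDeriv_succ]
    exact deriv.star (f := iteratedDeriv k f)

/-- vanishing of iterated derivatives at a one-sided boundary point -/
lemma myBoundaryDeriv {f : ℝ → ℂ} {n m : ℕ} (hf : ContDiff ℝ n f) (hm : m ≤ n)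
    {s : Set ℝ} (hs : IsOpen s) (h0 : ∀ x ∈ s, f x = 0) [NeBot (𝓝[s] (0:ℝ))] :
    iteratedDeriv m f 0 = 0 := by
  have hz : ∀ x ∈ s, iteratedDeriv m f x = 0 := by
    intro x hx
    have hev : f =ᶠ[𝓝 x] fun _ => (0:ℂ) := by
      filter_upwards [hs.mem_nhds hx] with y hy using h0 y hy
    rw [hev.iteratedDeriv_eq m, myIteratedDeriv_const]
    simp
  have hcont : Continuous (iteratedDeriv m f) :=
    hf.continuous_iteratedDeriv m (by exact_mod_cast hm)
  have h1 : Tendsto (iteratedDeriv m f) (𝓝[s] 0) (𝓝 (iteratedDeriv m f 0)) :=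
    (hcont.continuousAt.tendsto).mono_left nhdsWithin_le_nhds
  have h2 : Tendsto (iteratedDeriv m f) (𝓝[s] 0) (𝓝 0) := by
    refine Tendsto.congr' ?_ tendsto_const_nhds
    filter_upwards [self_mem_nhdsWithin] with y hy using (hz y hy).symm
  exact tendsto_nhds_unique h1 h2

/-- Leibniz rule for iteratedDeriv on ℝ → ℂ -/
lemma myLeibniz {n : ℕ} {f g : ℝ → ℂ} (hf : ContDiff ℝ n f) (hg : ContDiff ℝ n g) :
    ∀ m : ℕ, m ≤ n → ∀ x : ℝ,
      iteratedDeriv m (fun y => f y * g y) x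
        = ∑ j ∈ Finset.range (m + 1),
            (m.choose j : ℂ) * iteratedDeriv j f x * iteratedDeriv (m - j) g x := by
  intro m
  induction m with
  | zero => intro _ x; simp
  | succ k ih =>
    intro hk x
    have hk' : k ≤ n := Nat.le_of_succ_le hk
    have hfun : iteratedDeriv k (fun y => f y * g y)
        = fun y => ∑ j ∈ Finset.range (k + 1),
            (k.choose j : ℂ) * iteratedDeriv j f y * iteratedDeriv (k - j) g y :=
      funext (fun y => ih hk' y)
    have hdf : ∀ j : ℕ, j ≤ k → DifferentiableAt ℝ (iteratedDeriv j f) x := fun j hj =>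
      (hf.differentiable_iteratedDeriv j (by exact_mod_cast lt_of_le_of_lt hj hk)).differentiableAt
    have hdg : ∀ j : ℕ, j ≤ k → DifferentiableAt ℝ (iteratedDeriv j g) x := fun j hj =>
      (hg.differentiable_iteratedDeriv j (by exact_mod_cast lt_of_le_of_lt hj hk)).differentiableAt
    rw [iteratedDeriv_succ, hfun]
    rw [deriv_fun_sum (fun j hj => by
      have h1 := hdf j (Nat.lt_succ_iff.mp (Finset.mem_range.mp hj))
      have h2 := hdg (k - j) (Nat.sub_le k j)
      exact DifferentiableAt.mul (h1.const_mul _) h2)]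
    have hterm : ∀ j ∈ Finset.range (k + 1),
        deriv (fun y => (k.choose j : ℂ) * iteratedDeriv j f y * iteratedDeriv (k - j) g y) x
          = (k.choose j : ℂ) * (iteratedDeriv (j+1) f x * iteratedDeriv (k - j) g x
              + iteratedDeriv j f x * iteratedDeriv (k - j + 1) g x) := by
      intro j hj
      have hj' : j ≤ k := Nat.lt_succ_iff.mp (Finset.mem_range.mp hj)
      have : deriv (fun y => (k.choose j : ℂ) * iteratedDeriv j f y * iteratedDeriv (k - j) g y) x
          = (k.choose j : ℂ) * deriv (fun y => iteratedDeriv j f y * iteratedDeriv (k - j) g y) x := by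
        simp_rw [mul_assoc]
        exact deriv_const_mul _ ((hdf j hj').mul (hdg (k - j) (Nat.sub_le _ _)))
      rw [this, deriv_fun_mul (hdf j hj') (hdg (k - j) (Nat.sub_le _ _)),
        ← iteratedDeriv_succ, ← iteratedDeriv_succ]
      try ring
    rw [Finset.sum_congr rfl hterm]
    -- now the combinatorial rearrangement
    set A : ℕ → ℂ := fun i => iteratedDeriv i f x with hA
    set B : ℕ → ℂ := fun i => iteratedDeriv i g x with hB
    have expand : ∑ j ∈ Finset.range (k + 1),
        (k.choose j : ℂ) * (A (j+1) * B (k - j) + A j * B (k - j + 1))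
        = (∑ j ∈ Finset.range (k + 1), (k.choose j : ℂ) * A (j+1) * B (k - j))
          + ∑ j ∈ Finset.range (k + 1), (k.choose j : ℂ) * A j * B (k - j + 1) := by
      rw [← Finset.sum_add_distrib]; apply Finset.sum_congr rfl; intros; ring
    rw [expand]
    have h2 : ∀ j ∈ Finset.range (k+1), (k.choose j : ℂ) * A j * B (k - j + 1)
        = (k.choose j : ℂ) * A j * B (k + 1 - j) := by
      intro j hj
      have : k - j + 1 = k + 1 - j := by
        have := Nat.lt_succ_iff.mp (Finset.mem_range.mp hj); omega
      rw [this]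
    rw [Finset.sum_congr rfl h2]
    -- RHS: peel off i = 0 using sum_range_succ'
    rw [Finset.sum_range_succ' (fun i => ((k+1).choose i : ℂ) * A i * B (k + 1 - i))]
    have h3 : ∀ i ∈ Finset.range (k+1), ((k+1).choose (i+1) : ℂ) * A (i+1) * B (k + 1 - (i+1))
        = (k.choose i : ℂ) * A (i+1) * B (k - i) + (k.choose (i+1) : ℂ) * A (i+1) * B (k - i) := by
      intro i hi
      have : (k+1).choose (i+1) = k.choose i + k.choose (i+1) := Nat.choose_succ_succ k i
      rw [this]
      have : k + 1 - (i + 1) = k - i := by omega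
      rw [this]; push_cast; ring
    rw [Finset.sum_congr rfl h3, Finset.sum_add_distrib]
    -- second sum on LHS: peel off j = 0
    rw [Finset.sum_range_succ' (fun j => (k.choose j : ℂ) * A j * B (k + 1 - j))]
    have h4 : ∀ i ∈ Finset.range k, (k.choose (i+1) : ℂ) * A (i+1) * B (k + 1 - (i+1))
        = (k.choose (i+1) : ℂ) * A (i+1) * B (k - i) := by
      intro i hi
      have : k + 1 - (i+1) = k - i := by omega
      rw [this]
    rw [Finset.sum_congr rfl h4]
    have h5 : ∑ i ∈ Finset.range (k+1), (k.choose (i+1) : ℂ) * A (i+1) * B (k - i)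
        = ∑ i ∈ Finset.range k, (k.choose (i+1) : ℂ) * A (i+1) * B (k - i) := by
      rw [Finset.sum_range_succ]
      simp [Nat.choose_succ_self]
    rw [h5]
    simp [Nat.choose_zero_right]
    ring


/-- If `g ∈ V^n₊(ℝ)` has `g⁽ᵐ⁾(0) = 0` for `m = 1,…,n` and `h ∈ Cⁿ(ℝ)`
satisfies the window condition `∑ₘ g(x+m) conj(h(x+m)) = b`, then `h⁽ᵐ⁾(0) = 0` for
`m = 1,…,n`. -/
theorem statement10 (n : ℕ) (hn : 0 < n) (g : ℝ → ℂ) (hg : Vplus n g)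
    (hg0 : ∀ m : ℕ, 1 ≤ m → m ≤ n → iteratedDeriv m g 0 = 0)
    (h : ℝ → ℂ) (hh : ContDiff ℝ n h) (b : ℂ)
    (hwin : ∀ x : ℝ, ∑' m : ℤ, g (x + (m : ℝ)) * (starRingEnd ℂ) (h (x + (m : ℝ))) = b) :
    ∀ m : ℕ, 1 ≤ m → m ≤ n → iteratedDeriv m h 0 = 0 := by
  intro m hm1 hmn
  set H : ℝ → ℂ := fun x => (starRingEnd ℂ) (h x) with hHdef
  have hH : ContDiff ℝ n H := by
    have := (Complex.conjCLE.contDiff (n := n)).comp hh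
    simpa [Function.comp_def, hHdef, Complex.conjCAE_apply] using this
  set F : ℝ → ℂ := fun x => g x * H x with hFdef
  have hF : ContDiff ℝ n F := hg.1.mul hH
  have hgz : ∀ x : ℝ, x ∉ Set.Icc (-1:ℝ) 1 → g x = 0 := by
    intro x hx
    refine image_eq_zero_of_notMem_tsupport ?_
    rw [hg.2.1]; exact hx
  -- the window condition as a finite sum near 0
  have hsum : ∀ x ∈ Set.Ioo (-(1/2):ℝ) (1/2),
      F (x + (-1)) + (F x + F (x + 1)) = b := by
    intro x hx
    have hw := hwin x
    rw [tsum_eq_sum (s := ({-1, 0, 1} : Finset ℤ)) ?_] at hw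
    · rw [show ({-1, 0, 1} : Finset ℤ) = insert (-1) (insert 0 {1}) from rfl,
        Finset.sum_insert (by decide), Finset.sum_insert (by decide),
        Finset.sum_singleton] at hw
      push_cast at hw
      simpa [hFdef, hHdef, add_assoc] using hw
    · intro k hk
      simp only [Finset.mem_insert, Finset.mem_singleton] at hk
      push_neg at hk
      obtain ⟨h1, h2, h3⟩ := hk
      have hk2 : k ≤ -2 ∨ 2 ≤ k := by omega
      have hout : x + (k:ℝ) ∉ Set.Icc (-1:ℝ) 1 := by
        intro hmem
        obtain ⟨hl, hr⟩ := hmem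
        rcases hk2 with hk2 | hk2
        · have : (k:ℝ) ≤ -2 := by exact_mod_cast hk2
          have := hx.2; linarith
        · have : (2:ℝ) ≤ (k:ℝ) := by exact_mod_cast hk2
          have := hx.1; linarith
      simp [hgz _ hout]
  set Φ : ℝ → ℂ := fun x => F (x + (-1)) + (F x + F (x + 1)) with hΦdef
  have hFp : ContDiff ℝ n (fun x : ℝ => F (x + 1)) :=
    hF.comp (contDiff_id.add contDiff_const)
  have hFm : ContDiff ℝ n (fun x : ℝ => F (x + (-1))) :=
    hF.comp (contDiff_id.add contDiff_const)
  -- derivatives of Φ at 0 vanish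
  have hΦ0 : iteratedDeriv m Φ 0 = 0 := by
    have hev : Φ =ᶠ[𝓝 (0:ℝ)] fun _ => b := by
      filter_upwards [isOpen_Ioo.mem_nhds (show (0:ℝ) ∈ Set.Ioo (-(1/2):ℝ) (1/2) by norm_num)]
        with y hy using hsum y hy
    rw [hev.iteratedDeriv_eq m, myIteratedDeriv_const]
    simp [Nat.one_le_iff_ne_zero.mp hm1]
  -- derivatives of the shifted copies at 0 vanish
  have hFp0 : iteratedDeriv m (fun x : ℝ => F (x + 1)) 0 = 0 := by
    refine myBoundaryDeriv hFp hmn (s := Set.Ioi 0) isOpen_Ioi ?_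
    intro x hx
    have : x + 1 ∉ Set.Icc (-1:ℝ) 1 := by
      intro hmem; have := hmem.2; simp only [Set.mem_Ioi] at hx; linarith
    simp [hFdef, hgz _ this]
  have hFm0 : iteratedDeriv m (fun x : ℝ => F (x + (-1))) 0 = 0 := by
    refine myBoundaryDeriv hFm hmn (s := Set.Iio 0) isOpen_Iio ?_
    intro x hx
    have : x + (-1) ∉ Set.Icc (-1:ℝ) 1 := by
      intro hmem; have := hmem.1; simp only [Set.mem_Iio] at hx; linarith
    simp [hFdef, hgz _ this]
  -- hence derivatives of F at 0 vanish
  have hF0 : iteratedDeriv m F 0 = 0 := by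
    have hle : (m : WithTop ℕ∞) ≤ (n : WithTop ℕ∞) := by exact_mod_cast hmn
    have e1 : iteratedDeriv m (fun x : ℝ => F (x + (-1)) + (F x + F (x + 1))) 0
        = iteratedDeriv m (fun x : ℝ => F (x + (-1))) 0
          + iteratedDeriv m (fun x : ℝ => F x + F (x + 1)) 0 :=
      myIteratedDeriv_add (hFm.of_le hle) ((hF.add hFp).of_le hle) 0
    have e2 : iteratedDeriv m (fun x : ℝ => F x + F (x + 1)) 0
        = iteratedDeriv m F 0 + iteratedDeriv m (fun x : ℝ => F (x + 1)) 0 :=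
      myIteratedDeriv_add (hF.of_le hle) (hFp.of_le hle) 0
    have hsplit : iteratedDeriv m Φ 0
        = iteratedDeriv m (fun x : ℝ => F (x + (-1))) 0
          + (iteratedDeriv m F 0 + iteratedDeriv m (fun x : ℝ => F (x + 1)) 0) := by
      rw [hΦdef, e1, e2]
    rw [hΦ0] at hsplit
    rw [hFp0, hFm0] at hsplit
    linear_combination -hsplit
  -- Leibniz at 0
  have hleib := myLeibniz hg.1 hH m hmn 0
  rw [← hFdef, hF0] at hleib
  have hsum2 : ∑ j ∈ Finset.range (m+1),
      (m.choose j : ℂ) * iteratedDeriv j g 0 * iteratedDeriv (m - j) H 0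
      = g 0 * iteratedDeriv m H 0 := by
    rw [Finset.sum_range_succ'
      (fun j => (m.choose j : ℂ) * iteratedDeriv j g 0 * iteratedDeriv (m - j) H 0)]
    have hzero : ∀ i ∈ Finset.range m,
        (m.choose (i+1) : ℂ) * iteratedDeriv (i+1) g 0 * iteratedDeriv (m - (i+1)) H 0 = 0 := by
      intro i hi
      rw [hg0 (i+1) (by omega) (by have := Finset.mem_range.mp hi; omega)]
      ring
    rw [Finset.sum_congr rfl hzero]
    simp
  rw [hsum2] at hleib
  have g0ne : g 0 ≠ 0 := hg.2.2 0 (by norm_num)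
  have hH0 : iteratedDeriv m H 0 = 0 := by
    rcases mul_eq_zero.mp hleib.symm with h' | h'
    · exact absurd h' g0ne
    · exact h'
  have hc : iteratedDeriv m H 0 = (starRingEnd ℂ) (iteratedDeriv m h 0) := by
    rw [hHdef]
    exact congrFun (myIteratedDeriv_conj m h) 0
  rw [hc] at hH0
  have := congrArg (starRingEnd ℂ) hH0
  simpa using this


end
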